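/- Let μ be a real number with -π < μ < 0 and let a be a real number with a > 1/2. Then (Γ(a)/2) · Σ_{n∈ℤ} ( (2a-1)·(2n+1)²π² - μ² ) / ( (2n+1)²π² + μ² )^{a+1} = Σ_{k=0}^∞ (-1)^k · ( Γ(k+a)·(2a+2k-1) / k! ) · ( (2^{2a+2k} - 1) / (2π)^{2a+2k} ) · ζ(2a+2k) · μ^{2k}, where both series converge absolutely. -/

import Mathlib

open MeasureTheory Real Set

open Filter Topology

noncomputable def bc (a : ℝ) (k : ℕ) : ℝ := Real.Gamma (a + k) / (k.factorial * Real.Gamma a)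

lemma bc_pos {a : ℝ} (ha : 0 < a) (k : ℕ) : 0 < bc a k := by
  apply div_pos (Real.Gamma_pos_of_pos (by positivity))
  exact mul_pos (by exact_mod_cast k.factorial_pos) (Real.Gamma_pos_of_pos ha)

lemma bc_zero {a : ℝ} (ha : 0 < a) : bc a 0 = 1 := by
  simp [bc, div_self (by positivity : (1:ℝ) * Real.Gamma a ≠ 0),
    (Real.Gamma_pos_of_pos ha).ne']

lemma bc_succ {a : ℝ} (ha : 0 < a) (k : ℕ) :
    bc a (k + 1) * (k + 1) = (a + k) * bc a k := by
  have h2 : Real.Gamma (a + ((k:ℝ) + 1)) = (a + k) * Real.Gamma (a + k) := by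
    rw [show a + ((k:ℝ) + 1) = (a + k) + 1 by ring, Real.Gamma_add_one (by positivity)]
  have hΓ : Real.Gamma a ≠ 0 := (Real.Gamma_pos_of_pos ha).ne'
  have hf : (k.factorial : ℝ) ≠ 0 := by exact_mod_cast k.factorial_pos.ne'
  unfold bc
  push_cast [Nat.factorial_succ]
  rw [h2]
  field_simp

lemma bc_ratio_tendsto (a : ℝ) (c : ℝ) :
    Tendsto (fun k : ℕ => (a + k) / (k + 1) * c) atTop (𝓝 c) := by
  have h : ∀ k : ℕ, (a + (k:ℝ)) / (k + 1) = 1 + (a - 1) * (1 / ((k:ℝ) + 1)) := by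
    intro k
    have : ((k:ℝ) + 1) ≠ 0 := by positivity
    field_simp
    ring
  have h2 : Tendsto (fun k : ℕ => 1 + (a - 1) * (1 / ((k:ℝ) + 1))) atTop (𝓝 1) := by
    have := (tendsto_one_div_add_atTop_nhds_zero_nat).const_mul (a - 1)
    simpa using (tendsto_const_nhds (x := (1:ℝ))).add this
  have h3 : Tendsto (fun k : ℕ => (a + (k:ℝ)) / (k + 1)) atTop (𝓝 1) := by
    simp_rw [h]; exact h2
  simpa using h3.mul_const c

lemma bc_summable {a : ℝ} (ha : 0 < a) {x : ℝ} (hx : |x| < 1) :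
    Summable (fun k : ℕ => bc a k * x ^ k) := by
  set r : ℝ := (1 + |x|) / 2 with hr
  have hxr : |x| < r := by rw [hr]; linarith
  have hr1 : r < 1 := by rw [hr]; linarith
  apply summable_of_ratio_norm_eventually_le hr1
  filter_upwards [Filter.Tendsto.eventually_lt_const hxr (bc_ratio_tendsto a |x|)] with k hk
  have hb := bc_pos ha k
  have hb1 := bc_pos ha (k + 1)
  have hkk : (0:ℝ) < (k:ℝ) + 1 := by positivity
  have hbc : bc a (k + 1) = (a + k) / (k + 1) * bc a k := by
    have h := bc_succ ha k
    field_simp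
    linarith [h]
  rw [Real.norm_eq_abs, Real.norm_eq_abs, abs_mul, abs_mul, abs_pow, abs_pow,
    abs_of_pos hb1, abs_of_pos hb, hbc, pow_succ]
  have h1 : (a + k) / (k + 1) * bc a k * (|x| ^ k * |x|) =
      ((a + k) / (k + 1) * |x|) * (bc a k * |x| ^ k) := by ring
  rw [h1]
  exact mul_le_mul_of_nonneg_right hk.le (by positivity)

lemma bc_shift {a : ℝ} (ha : 0 < a) (k : ℕ) : a * bc (a + 1) k = (a + k) * bc a k := by
  unfold bc
  rw [Real.Gamma_add_one ha.ne', show a + 1 + (k:ℝ) = (a + k) + 1 by ring,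
    Real.Gamma_add_one (by positivity)]
  have hΓ : Real.Gamma a ≠ 0 := (Real.Gamma_pos_of_pos ha).ne'
  have hf : (k.factorial : ℝ) ≠ 0 := by exact_mod_cast k.factorial_pos.ne'
  field_simp

lemma binom_hasSum {a : ℝ} (ha : 0 < a) {x : ℝ} (hx : |x| < 1) :
    HasSum (fun k : ℕ => bc a k * x ^ k) ((1 - x) ^ (-a)) := by
  set r : ℝ := (1 + |x|) / 2 with hr
  have hxr : |x| < r := by rw [hr]; linarith
  have hr1 : r < 1 := by rw [hr]; linarith
  have hr0 : 0 < r := by positivity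
  set u : ℕ → ℝ := fun k => bc a k * k * r ^ (k - 1) with hu_def
  have hu : Summable u := by
    rw [← summable_nat_add_iff 1]
    have h := (bc_summable (by linarith : (0:ℝ) < a + 1)
      (by rwa [abs_of_pos hr0] : |r| < 1)).mul_left a
    convert h using 2 with k
    · rfl
    have h1 : u (k + 1) = bc a (k + 1) * (k + 1) * r ^ k := by
      simp [hu_def]
    rw [h1, bc_succ ha, ← bc_shift ha]
    ring
  set g : ℕ → ℝ → ℝ := fun k y => bc a k * y ^ k with hg_def
  set g' : ℕ → ℝ → ℝ := fun k y => bc a k * (k * y ^ (k - 1)) with hg'_def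
  have hg : ∀ k y, y ∈ Set.Ioo (-r) r → HasDerivAt (g k) (g' k y) y :=
    fun k y _ => (hasDerivAt_pow k y).const_mul (bc a k)
  have hg' : ∀ k y, y ∈ Set.Ioo (-r) r → ‖g' k y‖ ≤ u k := by
    intro k y hy
    have hyr : |y| ≤ r := (abs_lt.2 ⟨hy.1, hy.2⟩).le
    have : ‖g' k y‖ = bc a k * k * |y| ^ (k - 1) := by
      rw [hg'_def]
      simp only [Real.norm_eq_abs, abs_mul, abs_pow, abs_of_pos (bc_pos ha k),
        Nat.abs_cast]
      ring
    rw [this, hu_def]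
    have h2 := pow_le_pow_left₀ (abs_nonneg y) hyr (k - 1)
    have hbk : 0 ≤ bc a k * k := mul_nonneg (bc_pos ha k).le (Nat.cast_nonneg k)
    exact mul_le_mul_of_nonneg_left h2 hbk
  have h0mem : (0:ℝ) ∈ Set.Ioo (-r) r := ⟨by linarith, hr0⟩
  have hsum0 : Summable fun k => g k 0 := bc_summable ha (by simp)
  have hF' : ∀ y ∈ Set.Ioo (-r) r,
      HasDerivAt (fun z => ∑' k, g k z) (∑' k, g' k y) y := by
    intro y hy
    exact hasDerivAt_tsum_of_isPreconnected hu isOpen_Ioo (convex_Ioo _ _).isPreconnected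
      hg hg' h0mem hsum0 hy
  set F : ℝ → ℝ := fun z => ∑' k, g k z with hF_def
  -- the ODE : (1 - y) * D y = a * F y
  have hODE : ∀ y ∈ Set.Ioo (-r) r, (1 - y) * (∑' k, g' k y) = a * F y := by
    intro y hy
    have hy1 : |y| < 1 := lt_trans (abs_lt.2 ⟨hy.1, hy.2⟩) hr1
    have hsD : Summable fun k => g' k y :=
      Summable.of_norm_bounded hu (fun k => hg' k y hy)
    have hsF : Summable fun k => g k y := bc_summable ha hy1
    have hD0 : g' 0 y = 0 := by simp [hg'_def]
    have step1 : (∑' k, g' k y) = ∑' k, (a + k) * bc a k * y ^ k := by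
      rw [Summable.tsum_eq_zero_add hsD, hD0, zero_add]
      congr 1
      funext k
      have : g' (k + 1) y = (bc a (k + 1) * (k + 1)) * y ^ k := by
        simp [hg'_def]; ring
      rw [this, bc_succ ha]
    have split : ∀ k : ℕ, (a + (k:ℝ)) * bc a k * y ^ k
        = a * g k y + g' k y * y := by
      intro k
      cases k with
      | zero => simp [hg_def, hg'_def]
      | succ n =>
        simp only [hg_def, hg'_def, Nat.add_sub_cancel]
        push_cast
        rw [pow_succ]
        ring
    have step2 : (∑' k, g' k y) = a * F y + (∑' k, g' k y) * y := by
      calc (∑' k, g' k y) = ∑' k : ℕ, (a + (k:ℝ)) * bc a k * y ^ k := step1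
        _ = ∑' k : ℕ, (a * g k y + g' k y * y) := tsum_congr fun k => split k
        _ = (∑' k, a * g k y) + ∑' k, g' k y * y :=
            Summable.tsum_add (hsF.mul_left a) (hsD.mul_right y)
        _ = a * F y + (∑' k, g' k y) * y := by rw [tsum_mul_left, tsum_mul_right]
    linarith [step2]
  -- H y = (1-y)^a * F y has zero derivative
  have hH : ∀ y ∈ Set.Ioo (-r) r, HasDerivAt (fun z => (1 - z) ^ a * F z) 0 y := by
    intro y hy
    have hy1 : y < 1 := lt_trans hy.2 hr1
    have h1y : 0 < 1 - y := by linarith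
    have hφ : HasDerivAt (fun z : ℝ => 1 - z) (-1) y := by
      simpa using (hasDerivAt_id y).const_sub 1
    have hpow : HasDerivAt (fun z : ℝ => (1 - z) ^ a) (-1 * (a * (1 - y) ^ (a - 1))) y := by
      have := hφ.rpow_const (p := a) (Or.inl h1y.ne')
      convert this using 1
      ring
    have := hpow.mul (hF' y hy)
    convert this using 1
    · rfl
    · rfl
    · rfl
    have hsplit : (1 - y) ^ a = (1 - y) ^ (a - 1) * (1 - y) := by
      rw [← Real.rpow_add_one h1y.ne']; ring_nf
    rw [hsplit]
    have hO := hODE y hy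
    linear_combination (-(1 - y) ^ (a - 1)) * hO
  -- conclude H x = H 0
  have hxmem : x ∈ Set.Ioo (-r) r := abs_lt.1 hxr
  have hF0 : F 0 = 1 := by
    have h1 : F 0 = ∑' k, g k 0 := rfl
    rw [h1, tsum_eq_single 0 (fun k hk => by simp [hg_def, zero_pow hk])]
    simp [hg_def, bc_zero ha]
  have key : (1 - x) ^ a * F x = 1 := by
    have hH0 : (1 - (0:ℝ)) ^ a * F 0 = 1 := by rw [hF0]; simp
    rcases le_or_gt 0 x with hx0 | hx0
    · have hsub : Set.Icc (0:ℝ) x ⊆ Set.Ioo (-r) r := by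
        intro y hy; exact ⟨by linarith [hy.1], lt_of_le_of_lt hy.2 hxmem.2⟩
      have hcont : ContinuousOn (fun z => (1 - z) ^ a * F z) (Set.Icc (0:ℝ) x) :=
        fun y hy => ((hH y (hsub hy)).continuousAt).continuousWithinAt
      have hder : ∀ y ∈ Set.Ico (0:ℝ) x,
          HasDerivWithinAt (fun z => (1 - z) ^ a * F z) 0 (Set.Ici y) y :=
        fun y hy => (hH y (hsub (Set.Ico_subset_Icc_self hy))).hasDerivWithinAt
      have h2 := constant_of_has_deriv_right_zero hcont hder x (Set.right_mem_Icc.2 hx0)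
      rw [h2]; simpa using hH0
    · have hsub : Set.Icc x (0:ℝ) ⊆ Set.Ioo (-r) r := by
        intro y hy; exact ⟨lt_of_lt_of_le hxmem.1 hy.1, lt_of_le_of_lt hy.2 hr0⟩
      have hcont : ContinuousOn (fun z => (1 - z) ^ a * F z) (Set.Icc x (0:ℝ)) :=
        fun y hy => ((hH y (hsub hy)).continuousAt).continuousWithinAt
      have hder : ∀ y ∈ Set.Ico x (0:ℝ),
          HasDerivWithinAt (fun z => (1 - z) ^ a * F z) 0 (Set.Ici y) y :=
        fun y hy => (hH y (hsub (Set.Ico_subset_Icc_self hy))).hasDerivWithinAt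
      have h2 := constant_of_has_deriv_right_zero hcont hder 0 (Set.right_mem_Icc.2 hx0.le)
      rw [← h2]; simpa using hH0
  have h1x : 0 < 1 - x := by
    have := (abs_lt.1 hx).2; linarith
  have hFx : F x = (1 - x) ^ (-a) := by
    rw [Real.rpow_neg h1x.le]
    exact eq_inv_of_mul_eq_one_right key
  have hfin := (bc_summable ha hx).hasSum
  rwa [show (∑' k : ℕ, bc a k * x ^ k) = F x from rfl, hFx] at hfin

lemma expand_hasSum {a X d : ℝ} (ha : 0 < a) (hX : 0 < X) (hd : |d| < X) :
    HasSum (fun k : ℕ => Real.Gamma (a + k) * (2*a + 2*k - 1) / k.factorial * d ^ k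
        * X ^ (-(a + (k:ℝ))))
      (Real.Gamma a * ((2*a - 1) * X + d) / (X - d) ^ (a + 1)) := by
  set t : ℝ := d / X with ht_def
  have htabs : |t| < 1 := by
    rw [ht_def, abs_div, abs_of_pos hX, div_lt_one hX]
    exact hd
  have h1t : 0 < 1 - t := by
    have := (abs_lt.1 htabs).2; linarith
  have hXd : 0 < X - d := by
    have : X * (1 - t) = X - d := by rw [ht_def]; field_simp
    nlinarith [mul_pos hX h1t]
  have ha1 : (0:ℝ) < a + 1 := by linarith
  have hΓa : 0 < Real.Gamma a := Real.Gamma_pos_of_pos ha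
  -- first series
  have h1 := (binom_hasSum ha htabs).mul_left ((2*a - 1) * Real.Gamma a * X ^ (-a))
  -- second series (shifted)
  have h2 := (binom_hasSum ha1 htabs).mul_left (2 * d * X ^ (-(a+1)) * Real.Gamma (a+1))
  set G : ℕ → ℝ := fun k => 2 * k * Real.Gamma (a + k) / k.factorial * d ^ k
      * X ^ (-(a + (k:ℝ))) with hG_def
  have hXk : ∀ k : ℕ, X ^ (-(a + ((k:ℝ)+1))) = X ^ (-(a+1)) * (X ^ (k:ℕ))⁻¹ := by
    intro k
    rw [show -(a + ((k:ℝ)+1)) = -(a+1) + -(k:ℝ) by ring, Real.rpow_add hX,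
      Real.rpow_neg hX.le (k:ℝ), Real.rpow_natCast X k]
  have hGshift : (fun k : ℕ => 2 * d * X ^ (-(a+1)) * Real.Gamma (a+1) * (bc (a+1) k * t ^ k))
      = fun k : ℕ => G (k + 1) := by
    funext k
    have hf : ((k+1).factorial : ℝ) = (k+1) * k.factorial := by
      push_cast [Nat.factorial_succ]; ring
    have hfk : (k.factorial : ℝ) ≠ 0 := by exact_mod_cast k.factorial_pos.ne'
    have hΓ1 : Real.Gamma (a + 1) ≠ 0 := (Real.Gamma_pos_of_pos ha1).ne'
    simp only [hG_def, bc]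
    push_cast
    rw [hXk k, show a + ((k:ℝ) + 1) = (a + 1) + k by ring, ht_def, div_pow, hf]
    have hXkne : (X ^ (k:ℕ)) ≠ 0 := by positivity
    field_simp
    ring
  have hG0 : G 0 = 0 := by simp [hG_def]
  have h2' : HasSum G (2 * d * X ^ (-(a+1)) * Real.Gamma (a+1) * (1 - t) ^ (-(a+1))) := by
    have hs : HasSum (fun n : ℕ => G (n + 1))
        (2 * d * X ^ (-(a+1)) * Real.Gamma (a+1) * (1 - t) ^ (-(a+1))) := by
      rw [← hGshift]; exact h2
    have := (hasSum_nat_add_iff (f := G) 1).mp hs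
    simpa [hG0] using this
  have htot := h1.add h2'
  have hterm : ∀ k : ℕ,
      (2*a - 1) * Real.Gamma a * X ^ (-a) * (bc a k * t ^ k) + G k
      = Real.Gamma (a + k) * (2*a + 2*k - 1) / k.factorial * d ^ k * X ^ (-(a + (k:ℝ))) := by
    intro k
    have hXak : X ^ (-(a + (k:ℝ))) = X ^ (-a) * (X ^ (k:ℕ))⁻¹ := by
      rw [show -(a + (k:ℝ)) = -a + -(k:ℝ) by ring, Real.rpow_add hX,
        Real.rpow_neg hX.le (k:ℝ), Real.rpow_natCast X k]
    have hfk : (k.factorial : ℝ) ≠ 0 := by exact_mod_cast k.factorial_pos.ne'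
    have hXkne : (X ^ (k:ℕ)) ≠ 0 := by positivity
    simp only [hG_def, bc]
    rw [hXak, ht_def, div_pow]
    field_simp
    ring
  rw [funext hterm] at htot
  convert htot using 1
  · rfl
  have e1 : X ^ (-a) * (1 - t) ^ (-a) = (X - d) ^ (-a) := by
    rw [← Real.mul_rpow hX.le h1t.le]
    congr 1
    rw [ht_def]; field_simp
  have e2 : X ^ (-(a+1)) * (1 - t) ^ (-(a+1)) = (X - d) ^ (-(a+1)) := by
    rw [← Real.mul_rpow hX.le h1t.le]
    congr 1
    rw [ht_def]; field_simp
  have e3 : (X - d) ^ (-a) = (X - d) ^ (-(a+1)) * (X - d) := by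
    rw [← Real.rpow_add_one hXd.ne']
    ring_nf
  have e4 : Real.Gamma (a + 1) = a * Real.Gamma a := Real.Gamma_add_one ha.ne'
  have e5 : (X - d) ^ (-(a+1)) = ((X - d) ^ (a+1))⁻¹ := Real.rpow_neg hXd.le _
  calc Real.Gamma a * ((2*a - 1) * X + d) / (X - d) ^ (a + 1)
      = Real.Gamma a * ((2*a-1) * (X - d) + 2 * a * d) * (X - d) ^ (-(a+1)) := by
        rw [e5]; ring_nf
    _ = (2*a - 1) * Real.Gamma a * ((X - d) ^ (-(a+1)) * (X - d))
        + 2 * d * Real.Gamma (a+1) * (X - d) ^ (-(a+1)) := by rw [e4]; ring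
    _ = (2*a - 1) * Real.Gamma a * (X ^ (-a) * (1 - t) ^ (-a))
        + 2 * d * X ^ (-(a+1)) * Real.Gamma (a+1) * (1 - t) ^ (-(a+1)) := by
        rw [e1, ← e3, ← e2]; ring
    _ = (2*a - 1) * Real.Gamma a * X ^ (-a) * (1 - t) ^ (-a)
        + 2 * d * X ^ (-(a+1)) * Real.Gamma (a+1) * (1 - t) ^ (-(a+1)) := by ring

lemma odd_hasSum {s : ℝ} (hs : 1 < s) :
    HasSum (fun m : ℕ => (2 * (m:ℝ) + 1) ^ (-s))
      ((1 - (2:ℝ) ^ (-s)) * ∑' n : ℕ, (n:ℝ) ^ (-s)) := by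
  set f : ℕ → ℝ := fun n => (n:ℝ) ^ (-s) with hf_def
  have hf : Summable f := Real.summable_nat_rpow.mpr (by linarith)
  set Z := ∑' n : ℕ, f n with hZ
  have he : HasSum (fun m : ℕ => f (2 * m)) ((2:ℝ) ^ (-s) * Z) := by
    have h2 := hf.hasSum.mul_left ((2:ℝ) ^ (-s))
    convert h2 using 2 with m
    · rfl
    rw [hf_def]
    push_cast
    rw [Real.mul_rpow (by norm_num) (m.cast_nonneg)]
  have hosum : Summable (fun m : ℕ => f (2 * m + 1)) :=
    hf.comp_injective (i := fun m => 2 * m + 1) (fun x y h => by simp only [] at h; omega)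
  have ho := hosum.hasSum
  have huniq := (he.even_add_odd ho).unique hf.hasSum
  have hW : (∑' m : ℕ, f (2 * m + 1)) = (1 - (2:ℝ) ^ (-s)) * Z := by
    linarith [huniq]
  rw [hW] at ho
  convert ho using 2 with m
  rw [hf_def]
  push_cast
  ring_nf

lemma zeta_real {s : ℝ} (hs : 1 < s) :
    riemannZeta (s : ℂ) = ((∑' n : ℕ, (n:ℝ) ^ (-s) : ℝ) : ℂ) := by
  rw [zeta_eq_tsum_one_div_nat_cpow (by simpa using hs), Complex.ofReal_tsum]
  congr 1
  funext n
  rw [Real.rpow_neg (n.cast_nonneg), Complex.ofReal_inv, Complex.ofReal_cpow n.cast_nonneg s,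
    Complex.ofReal_natCast, one_div]

set_option maxHeartbeats 1000000 in
theorem stmt8 (μ a : ℝ) (hμ₁ : -π < μ) (hμ₂ : μ < 0) (ha : a > 1/2) :
    Summable (fun n : ℤ => ((2 * a - 1) * (2 * (n : ℝ) + 1) ^ 2 * π ^ 2 - μ ^ 2) /
        ((2 * (n : ℝ) + 1) ^ 2 * π ^ 2 + μ ^ 2) ^ (a + 1)) ∧
    Summable (fun k : ℕ =>
      (((-1 : ℝ) ^ k * (Real.Gamma ((k : ℝ) + a) * (2 * a + 2 * (k : ℝ) - 1) / (Nat.factorial k)) *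
          (((2 : ℝ) ^ (2 * a + 2 * (k : ℝ)) - 1) / (2 * π) ^ (2 * a + 2 * (k : ℝ))) *
          μ ^ (2 * k) : ℝ) : ℂ) * riemannZeta ((2 * a + 2 * (k : ℝ) : ℝ) : ℂ)) ∧
    ((Real.Gamma a / 2 *
        ∑' n : ℤ, ((2 * a - 1) * (2 * (n : ℝ) + 1) ^ 2 * π ^ 2 - μ ^ 2) /
          ((2 * (n : ℝ) + 1) ^ 2 * π ^ 2 + μ ^ 2) ^ (a + 1) : ℝ) : ℂ)
      = ∑' k : ℕ,
          (((-1 : ℝ) ^ k * (Real.Gamma ((k : ℝ) + a) * (2 * a + 2 * (k : ℝ) - 1) /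
              (Nat.factorial k)) *
            (((2 : ℝ) ^ (2 * a + 2 * (k : ℝ)) - 1) / (2 * π) ^ (2 * a + 2 * (k : ℝ))) *
            μ ^ (2 * k) : ℝ) : ℂ) * riemannZeta ((2 * a + 2 * (k : ℝ) : ℝ) : ℂ) := by
  have hπ := Real.pi_pos
  have ha0 : (0:ℝ) < a := by linarith
  have hΓa : 0 < Real.Gamma a := Real.Gamma_pos_of_pos ha0
  have hμ0 : μ ≠ 0 := ne_of_lt hμ₂
  set b : ℝ := μ ^ 2 with hb_def
  have hb : 0 < b := by rw [hb_def]; positivity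
  have hbπ : b < π ^ 2 := by rw [hb_def]; nlinarith
  set X : ℕ → ℝ := fun m => (2 * (m:ℝ) + 1) ^ 2 * π ^ 2 with hX_def
  have hX : ∀ m, 0 < X m := fun m => by rw [hX_def]; positivity
  have hπ2X : ∀ m : ℕ, π ^ 2 ≤ X m := by
    intro m
    simp only [hX_def]
    have h0 : (0:ℝ) ≤ (m:ℝ) := m.cast_nonneg
    nlinarith [sq_nonneg π, mul_nonneg h0 h0]
  have hbX : ∀ m, b < X m := fun m => lt_of_lt_of_le hbπ (hπ2X m)
  set T : ℕ → ℕ → ℝ := fun m k => Real.Gamma (a + k) * (2*a + 2*(k:ℝ) - 1) / k.factorial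
      * (-b) ^ k * (X m) ^ (-(a + (k:ℝ))) with hT_def
  -- row sums
  have hrow : ∀ m, HasSum (fun k => T m k)
      (Real.Gamma a * ((2*a - 1) * X m - b) / (X m + b) ^ (a + 1)) := by
    intro m
    have habs : |(-b)| < X m := by rw [abs_neg, abs_of_pos hb]; exact hbX m
    have h := expand_hasSum ha0 (hX m) habs
    have e1 : X m - -b = X m + b := by ring
    have e2 : (2*a - 1) * X m + -b = (2*a - 1) * X m - b := by ring
    rw [e1, e2] at h
    exact h
  -- |T|
  have hTabs : ∀ m k, |T m k| = Real.Gamma (a + k) * (2*a + 2*(k:ℝ) - 1) / k.factorial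
      * b ^ k * (X m) ^ (-(a + (k:ℝ))) := by
    intro m k
    have hΓak : 0 < Real.Gamma (a + k) := Real.Gamma_pos_of_pos (by positivity)
    have h2ak : (0:ℝ) < 2*a + 2*(k:ℝ) - 1 := by
      have : (0:ℝ) ≤ (k:ℝ) := k.cast_nonneg
      linarith
    have h1 : T m k = (-1)^k * (Real.Gamma (a + k) * (2*a + 2*(k:ℝ) - 1) / k.factorial
        * b ^ k * (X m) ^ (-(a + (k:ℝ)))) := by
      simp only [hT_def]
      ring
    rw [h1, abs_mul, abs_pow, abs_neg, abs_one, one_pow, one_mul, abs_of_nonneg]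
    have hfk : (0:ℝ) ≤ (k.factorial : ℝ) := by positivity
    have hrp : (0:ℝ) ≤ (X m) ^ (-(a + (k:ℝ))) := Real.rpow_nonneg (hX m).le _
    exact mul_nonneg (mul_nonneg (div_nonneg (mul_nonneg hΓak.le h2ak.le) hfk)
      (pow_nonneg hb.le k)) hrp
  have hrowabs : ∀ m, HasSum (fun k => |T m k|)
      (Real.Gamma a * ((2*a - 1) * X m + b) / (X m - b) ^ (a + 1)) := by
    intro m
    have habs : |b| < X m := by rw [abs_of_pos hb]; exact hbX m
    have h := expand_hasSum ha0 (hX m) habs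
    rw [show (fun k : ℕ => |T m k|) = fun k : ℕ => Real.Gamma (a + k) * (2*a + 2*(k:ℝ) - 1)
      / k.factorial * b ^ k * (X m) ^ (-(a + (k:ℝ))) from funext (hTabs m)]
    exact h
  -- summability of row sums
  set q : ℝ := b / π ^ 2 with hq_def
  have hq1 : q < 1 := by rw [hq_def]; exact (div_lt_one (by positivity)).mpr hbπ
  have hq0 : 0 < q := by rw [hq_def]; positivity
  have hqq : q * π ^ 2 = b := by rw [hq_def]; field_simp
  have hXbq : ∀ m, X m * (1 - q) ≤ X m - b := by
    intro m
    have h1 := mul_le_mul_of_nonneg_left (hπ2X m) hq0.le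
    nlinarith [hqq]
  have hC0 : (0:ℝ) < (1 - q) ^ (a + 1) := Real.rpow_pos_of_pos (by linarith) _
  set C : ℝ := Real.Gamma a * (2 * a) / (1 - q) ^ (a + 1) with hC_def
  have hAle : ∀ m, Real.Gamma a * ((2*a - 1) * X m + b) / (X m - b) ^ (a + 1)
      ≤ C * (X m) ^ (-a) := by
    intro m
    have hXm := hX m
    have hXmb : 0 < X m - b := by have := hbX m; linarith
    have hnum : Real.Gamma a * ((2*a - 1) * X m + b) ≤ Real.Gamma a * (2 * a * X m) := by
      apply mul_le_mul_of_nonneg_left _ hΓa.le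
      have := hbX m
      nlinarith
    have hden : (X m * (1 - q)) ^ (a + 1) ≤ (X m - b) ^ (a + 1) :=
      Real.rpow_le_rpow (mul_nonneg (hX m).le (by linarith)) (hXbq m) (by linarith)
    have hmulr : (X m * (1 - q)) ^ (a + 1) = (X m) ^ (a + 1) * (1 - q) ^ (a + 1) :=
      Real.mul_rpow hXm.le (by linarith)
    have hd0 : (0:ℝ) < (X m * (1 - q)) ^ (a + 1) := Real.rpow_pos_of_pos (by nlinarith) _
    calc Real.Gamma a * ((2*a - 1) * X m + b) / (X m - b) ^ (a + 1)
        ≤ Real.Gamma a * (2 * a * X m) / ((X m * (1 - q)) ^ (a + 1)) := by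
          apply div_le_div₀ (by positivity) hnum hd0 hden
      _ = C * ((X m) ^ (1:ℝ) * ((X m) ^ (a + 1))⁻¹) := by
          rw [hmulr, hC_def, Real.rpow_one]
          field_simp
      _ = C * (X m) ^ (-a) := by
          rw [← Real.rpow_neg hXm.le (a+1), ← Real.rpow_add hXm]
          ring_nf
  have hXa_summable : Summable (fun m : ℕ => (X m) ^ (-a)) := by
    have hf : Summable (fun n : ℕ => (n:ℝ) ^ (-(2*a))) :=
      Real.summable_nat_rpow.mpr (by linarith)
    have hcomp := hf.comp_injective (i := fun m => 2 * m + 1)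
      (fun x y h => by simp only [] at h; omega)
    have hbig : Summable (fun m : ℕ => (2*(m:ℝ)+1) ^ (-(2*a)) * (π ^ 2) ^ (-a)) := by
      apply Summable.mul_right
      have he : (fun m : ℕ => (2*(m:ℝ)+1) ^ (-(2*a)))
          = (fun n : ℕ => (n:ℝ) ^ (-(2*a))) ∘ (fun m => 2 * m + 1) := by
        funext m
        simp only [Function.comp_apply]
        push_cast
        ring_nf
      rw [he]
      exact hcomp
    convert hbig using 2 with m
    simp only [hX_def]
    rw [Real.mul_rpow (by positivity) (by positivity)]
    congr 1
    rw [← Real.rpow_natCast (2*(m:ℝ)+1) 2, ← Real.rpow_mul (by positivity)]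
    congr 1
    push_cast
    ring
  have hA_summable : Summable (fun m : ℕ =>
      Real.Gamma a * ((2*a - 1) * X m + b) / (X m - b) ^ (a + 1)) := by
    apply Summable.of_nonneg_of_le _ hAle (hXa_summable.mul_left C)
    intro m
    rw [← (hrowabs m).tsum_eq]
    exact tsum_nonneg (fun k => abs_nonneg _)
  -- product summability
  have habs_prod : Summable (fun p : ℕ × ℕ => |T p.1 p.2|) := by
    rw [summable_prod_of_nonneg (fun p => abs_nonneg _)]
    refine ⟨fun m => (hrowabs m).summable, ?_⟩
    have he : (fun m => ∑' k, |T m k|) = fun m =>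
        Real.Gamma a * ((2*a - 1) * X m + b) / (X m - b) ^ (a + 1) :=
      funext fun m => (hrowabs m).tsum_eq
    rw [he]
    exact hA_summable
  have hprod : Summable (fun p : ℕ × ℕ => T p.1 p.2) := summable_abs_iff.mp habs_prod
  -- column sums
  have hsk : ∀ k : ℕ, 1 < 2*a + 2*(k:ℝ) := by
    intro k
    have : (0:ℝ) ≤ (k:ℝ) := k.cast_nonneg
    linarith
  have hXpow : ∀ m k : ℕ, (X m) ^ (-(a + (k:ℝ)))
      = (2*(m:ℝ)+1) ^ (-(2*a + 2*(k:ℝ))) * π ^ (-(2*a + 2*(k:ℝ))) := by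
    intro m k
    simp only [hX_def]
    rw [Real.mul_rpow (by positivity) (by positivity)]
    congr 1
    · rw [← Real.rpow_natCast (2*(m:ℝ)+1) 2, ← Real.rpow_mul (by positivity)]
      congr 1
      push_cast
      ring
    · rw [← Real.rpow_natCast π 2, ← Real.rpow_mul hπ.le]
      congr 1
      push_cast
      ring
  set R : ℕ → ℝ := fun k => Real.Gamma (a + k) * (2*a + 2*(k:ℝ) - 1) / k.factorial
      * (-b) ^ k * π ^ (-(2*a + 2*(k:ℝ)))
      * ((1 - (2:ℝ) ^ (-(2*a + 2*(k:ℝ)))) * ∑' n : ℕ, (n:ℝ) ^ (-(2*a + 2*(k:ℝ))))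
      with hR_def
  have hcol : ∀ k : ℕ, HasSum (fun m => T m k) (R k) := by
    intro k
    have h := (odd_hasSum (hsk k)).mul_left
      (Real.Gamma (a + k) * (2*a + 2*(k:ℝ) - 1) / k.factorial * (-b) ^ k
        * π ^ (-(2*a + 2*(k:ℝ))))
    convert h using 2 with m
    · rfl
    · simp only [hT_def]
      rw [hXpow m k]
      ring
  -- swap
  have hU : Summable (fun p : ℕ × ℕ => T p.2 p.1) := hprod.prod_symm
  have hS1 : HasSum (fun m => Real.Gamma a * ((2*a - 1) * X m - b) / (X m + b) ^ (a + 1))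
      (∑' p : ℕ × ℕ, T p.1 p.2) := hprod.hasSum.prod_fiberwise hrow
  have hS2 : HasSum R (∑' p : ℕ × ℕ, T p.2 p.1) := hU.hasSum.prod_fiberwise hcol
  have htot_eq : (∑' p : ℕ × ℕ, T p.2 p.1) = ∑' p : ℕ × ℕ, T p.1 p.2 :=
    (Equiv.prodComm ℕ ℕ).tsum_eq (fun p : ℕ × ℕ => T p.1 p.2)
  rw [htot_eq] at hS2
  -- the natural-indexed LHS function
  set w : ℕ → ℝ := fun m => ((2*a - 1) * X m - b) / (X m + b) ^ (a + 1) with hw_def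
  have hw_sum : Summable w := by
    have h1 := hS1.summable.mul_left (Real.Gamma a)⁻¹
    have he : (fun m => (Real.Gamma a)⁻¹
        * (Real.Gamma a * ((2*a - 1) * X m - b) / (X m + b) ^ (a + 1))) = w := by
      funext m
      rw [hw_def]
      simp only
      rw [mul_div_assoc, ← mul_assoc, inv_mul_cancel₀ hΓa.ne', one_mul]
    rwa [he] at h1
  have hgw : ∀ m, Real.Gamma a * w m
      = Real.Gamma a * ((2*a - 1) * X m - b) / (X m + b) ^ (a + 1) := by
    intro m
    simp only [hw_def]
    rw [mul_div_assoc]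
  -- identification of the two ℤ-restrictions
  have hnat : ∀ n : ℕ, ((2 * a - 1) * (2 * ((n:ℤ) : ℝ) + 1) ^ 2 * π ^ 2 - b) /
      ((2 * ((n:ℤ) : ℝ) + 1) ^ 2 * π ^ 2 + b) ^ (a + 1) = w n := by
    intro n
    have h1 : (2 * ((n:ℤ) : ℝ) + 1) = 2 * (n:ℝ) + 1 := by push_cast; ring
    rw [h1, hw_def]
    simp only [hX_def]
    congr 1
    ring
  have hneg : ∀ n : ℕ, ((2 * a - 1) * (2 * (↑(-((n:ℤ) + 1)) : ℝ) + 1) ^ 2 * π ^ 2 - b) /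
      ((2 * (↑(-((n:ℤ) + 1)) : ℝ) + 1) ^ 2 * π ^ 2 + b) ^ (a + 1) = w n := by
    intro n
    have h1 : (2 * (↑(-((n:ℤ) + 1)) : ℝ) + 1) ^ 2 = (2 * (n:ℝ) + 1) ^ 2 := by
      push_cast; ring
    rw [h1, hw_def]
    simp only [hX_def]
    congr 1
    ring
  -- complex term identification
  have hterm : ∀ k : ℕ,
      (((-1 : ℝ) ^ k * (Real.Gamma ((k : ℝ) + a) * (2 * a + 2 * (k : ℝ) - 1) / (Nat.factorial k)) *
          (((2 : ℝ) ^ (2 * a + 2 * (k : ℝ)) - 1) / (2 * π) ^ (2 * a + 2 * (k : ℝ))) *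
          μ ^ (2 * k) : ℝ) : ℂ) * riemannZeta ((2 * a + 2 * (k : ℝ) : ℝ) : ℂ)
      = ((R k : ℝ) : ℂ) := by
    intro k
    rw [zeta_real (hsk k), ← Complex.ofReal_mul]
    congr 1
    simp only [hR_def]
    have h2s : (0:ℝ) < (2:ℝ) ^ (2*a + 2*(k:ℝ)) := Real.rpow_pos_of_pos two_pos _
    have hπs : (0:ℝ) < π ^ (2*a + 2*(k:ℝ)) := Real.rpow_pos_of_pos hπ _
    have h2π : ((2:ℝ)*π) ^ (2*a + 2*(k:ℝ)) = (2:ℝ)^(2*a + 2*(k:ℝ)) * π^(2*a + 2*(k:ℝ)) :=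
      Real.mul_rpow (by norm_num) hπ.le
    have hμ2k : μ ^ (2*k) = b ^ k := by rw [hb_def, pow_mul]
    have hnegb : (-b) ^ k = (-1:ℝ)^k * b ^ k := by rw [← neg_one_mul, mul_pow]
    have hΓcomm : Real.Gamma ((k:ℝ) + a) = Real.Gamma (a + (k:ℝ)) := by rw [add_comm]
    have hfk : ((k.factorial : ℝ)) ≠ 0 := by
      exact_mod_cast k.factorial_pos.ne'
    rw [hΓcomm, hμ2k, h2π, Real.rpow_neg (by norm_num : (0:ℝ) ≤ 2) (2*a + 2*(k:ℝ)),
      Real.rpow_neg hπ.le (2*a + 2*(k:ℝ)), hnegb]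
    field_simp
  -- the two ℕ-restrictions of the ℤ-indexed function
  have hs1 : Summable (fun n : ℕ => ((2 * a - 1) * (2 * ((n:ℤ) : ℝ) + 1) ^ 2 * π ^ 2 - b) /
      ((2 * ((n:ℤ) : ℝ) + 1) ^ 2 * π ^ 2 + b) ^ (a + 1)) := (summable_congr hnat).mpr hw_sum
  have hs2 : Summable (fun n : ℕ => ((2 * a - 1) * (2 * (↑(-((n:ℤ) + 1)) : ℝ) + 1) ^ 2 * π ^ 2 - b) /
      ((2 * (↑(-((n:ℤ) + 1)) : ℝ) + 1) ^ 2 * π ^ 2 + b) ^ (a + 1)) := (summable_congr hneg).mpr hw_sum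
  refine ⟨?_, ?_, ?_⟩
  · exact Summable.of_nat_of_neg_add_one hs1 hs2
  · exact (summable_congr hterm).mpr (Complex.summable_ofReal.mpr hS2.summable)
  · have hzt : (∑' n : ℤ, ((2 * a - 1) * (2 * (n : ℝ) + 1) ^ 2 * π ^ 2 - b) /
        ((2 * (n : ℝ) + 1) ^ 2 * π ^ 2 + b) ^ (a + 1)) = 2 * ∑' m, w m := by
      rw [tsum_of_nat_of_neg_add_one (f := fun n : ℤ =>
        ((2 * a - 1) * (2 * (n : ℝ) + 1) ^ 2 * π ^ 2 - b) /
        ((2 * (n : ℝ) + 1) ^ 2 * π ^ 2 + b) ^ (a + 1)) hs1 hs2,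
        tsum_congr hnat, tsum_congr hneg, two_mul]
    rw [hzt]
    have hmain : Real.Gamma a / 2 * (2 * ∑' m, w m) = ∑' k, R k := by
      calc Real.Gamma a / 2 * (2 * ∑' m, w m) = Real.Gamma a * ∑' m, w m := by ring
        _ = ∑' m, Real.Gamma a * w m := tsum_mul_left.symm
        _ = ∑' m, Real.Gamma a * ((2*a - 1) * X m - b) / (X m + b) ^ (a + 1) :=
            tsum_congr hgw
        _ = ∑' p : ℕ × ℕ, T p.1 p.2 := hS1.tsum_eq
        _ = ∑' k, R k := hS2.tsum_eq.symm
    rw [hmain, Complex.ofReal_tsum]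
    exact tsum_congr (fun k => (hterm k).symm)
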